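/- Let a > 1 be real, δ := a − √(a² − 1), and η := −δ. Define Q₀(t) := a/(a² − 1), Q₁(t) := 1/√(a² − 1) − t/(a² − 1), and for m ≥ 1, Q_m(t) := −2/(η − η⁻¹) + (4/(η − η⁻¹)) Σ_{j=0}^{m−1} ηʲ T_j(t) − (4 η^{m−1}/(η − η⁻¹)²) T_m(t), where T_j is the Chebyshev polynomial of the first kind of degree j. Then the three-term recurrence relation η⁻¹ Q_{m+2}(t) − 2t Q_{m+1}(t) + η Q_m(t) = −2 holds as a polynomial identity for all m ≥ 0. -/

import Mathlib

open Polynomial Polynomial.Chebyshev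

theorem best_approx_three_term_recurrence (a : ℝ) (ha : 1 < a)
    (δ η : ℝ) (hδ : δ = a - Real.sqrt (a ^ 2 - 1)) (hη : η = -δ)
    (Q : ℕ → Polynomial ℝ)
    (hQ0 : Q 0 = C (a / (a ^ 2 - 1)))
    (hQ1 : Q 1 = C (1 / Real.sqrt (a ^ 2 - 1)) - C (1 / (a ^ 2 - 1)) * X)
    (hQm : ∀ m : ℕ, 1 ≤ m →
      Q m = C (-2 / (η - η⁻¹)) +
        C (4 / (η - η⁻¹)) * ∑ j ∈ Finset.range m, C (η ^ j) * T ℝ j -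
        C (4 * η ^ (m - 1) / (η - η⁻¹) ^ 2) * T ℝ m) :
    ∀ m : ℕ, C η⁻¹ * Q (m + 2) - 2 * X * Q (m + 1) + C η * Q m = C (-2) := by
  set s := Real.sqrt (a ^ 2 - 1) with hs
  have ha2 : (0:ℝ) < a ^ 2 - 1 := by nlinarith
  have hs2 : s ^ 2 = a ^ 2 - 1 := Real.sq_sqrt ha2.le
  have hs0 : 0 < s := Real.sqrt_pos.mpr ha2
  have hsa : s < a := by nlinarith
  have hηv : η = s - a := by rw [hη, hδ]; ring
  have hηneg : η < 0 := by rw [hηv]; linarith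
  have hη0 : η ≠ 0 := hηneg.ne
  have hηinv : η⁻¹ = -(a + s) := by
    refine (inv_eq_of_mul_eq_one_right ?_)
    rw [hηv]; nlinarith
  have hdiff : η - η⁻¹ = 2 * s := by rw [hηinv, hηv]; ring
  have hkey : η ^ 2 = 2 * s * η + 1 := by rw [hηv]; linear_combination -hs2
  -- the difference formula
  have hD : ∀ m : ℕ, 1 ≤ m → Q (m + 1) - Q m
      = C (η ^ m / s ^ 2) * (C η * T ℝ m - T ℝ (m + 1)) := by
    intro m h
    obtain ⟨k, rfl⟩ : ∃ k, m = k + 1 := ⟨m - 1, by omega⟩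
    rw [hQm (k + 1 + 1) (by omega), hQm (k + 1) (by omega), Finset.sum_range_succ]
    have e1 : (k + 1 + 1 : ℕ) - 1 = k + 1 := by omega
    have e2 : (k + 1 : ℕ) - 1 = k := by omega
    rw [e1, e2]
    have c1 : 4 / (η - η⁻¹) * η ^ (k + 1) + 4 * η ^ k / (η - η⁻¹) ^ 2
        = η ^ (k + 1 + 1) / s ^ 2 := by
      rw [hdiff]
      field_simp
      ring_nf
      linear_combination (-4*η^k) * hkey
    have c2 : 4 * η ^ (k + 1) / (η - η⁻¹) ^ 2 = η ^ (k + 1) / s ^ 2 := by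
      rw [hdiff]; field_simp; ring
    have hc1 : (C (4 / (η - η⁻¹)) * C (η ^ (k + 1)) + C (4 * η ^ k / (η - η⁻¹) ^ 2) : ℝ[X])
        = C (η ^ (k + 1) / s ^ 2) * C η := by
      rw [← Polynomial.C_mul, ← Polynomial.C_mul, ← Polynomial.C_add]
      congr 1
      linear_combination c1
    have hc2 : (C (4 * η ^ (k + 1) / (η - η⁻¹) ^ 2) : ℝ[X]) = C (η ^ (k + 1) / s ^ 2) := by
      rw [c2]
    push_cast
    simp only [show ((k : ℤ) + 1 + 1) = (k : ℤ) + 2 by ring]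
    linear_combination (T ℝ (k + 1)) * hc1 - (T ℝ (k + 2)) * hc2
  have h1 : ∀ m : ℕ, (C η⁻¹ * C (η ^ (m + 2) / s ^ 2) : ℝ[X]) = C (η ^ (m + 1) / s ^ 2) := by
    intro m
    rw [← Polynomial.C_mul]
    congr 1
    rw [pow_succ _ (m + 1)]
    field_simp
  have h2 : ∀ m : ℕ, (C η * C (η ^ m / s ^ 2) : ℝ[X]) = C (η ^ (m + 1) / s ^ 2) := by
    intro m
    rw [← Polynomial.C_mul]
    congr 1
    rw [pow_succ]
    ring
  have hstep : ∀ m : ℕ, 1 ≤ m →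
      C η⁻¹ * Q (m + 1 + 2) - 2 * X * Q (m + 1 + 1) + C η * Q (m + 1)
      = C η⁻¹ * Q (m + 2) - 2 * X * Q (m + 1) + C η * Q m := by
    intro m hm
    have d1 := hD (m + 2) (by omega)
    have d2 := hD (m + 1) (by omega)
    have d3 := hD m hm
    have t1 : T ℝ ((m : ℤ) + 3) = 2 * X * T ℝ ((m : ℤ) + 2) - T ℝ ((m : ℤ) + 1) := by
      have := T_add_two ℝ ((m : ℤ) + 1)
      convert this using 2 <;> ring
    have t2 : T ℝ ((m : ℤ) + 2) = 2 * X * T ℝ ((m : ℤ) + 1) - T ℝ (m : ℤ) := T_add_two ℝ (m : ℤ)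
    have z : C η⁻¹ * (Q (m + 2 + 1) - Q (m + 2)) - 2 * X * (Q (m + 1 + 1) - Q (m + 1))
        + C η * (Q (m + 1) - Q m) = 0 := by
      rw [d1, d2, d3]
      push_cast
      simp only [show ((m : ℤ) + 2 + 1) = (m : ℤ) + 3 by ring,
        show ((m : ℤ) + 1 + 1) = (m : ℤ) + 2 by ring]
      rw [t1, t2]
      linear_combination (C η * (2*X*T ℝ ((m:ℤ)+1) - T ℝ (m:ℤ))
          - (2*X*(2*X*T ℝ ((m:ℤ)+1) - T ℝ (m:ℤ)) - T ℝ ((m:ℤ)+1))) * h1 m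
        + (C η * T ℝ (m:ℤ) - T ℝ ((m:ℤ)+1)) * h2 m
    linear_combination z
  have base1 : C η⁻¹ * Q 3 - 2 * X * Q 2 + C η * Q 1 = C (-2) := by
    have t3 : T ℝ 3 = 2 * X * (2 * X ^ 2 - 1) - X := by
      have h := T_add_two ℝ 1
      norm_num [T_two, T_one] at h
      exact h
    rw [hQm 3 (by omega), hQm 2 (by omega), hQm 1 (by omega)]
    norm_num [Finset.sum_range_succ, Finset.sum_range_one, T_zero, T_one, T_two, t3]
    apply Polynomial.funext
    intro x
    simp only [eval_add, eval_sub, eval_mul, eval_C, eval_X, eval_pow, eval_ofNat, eval_one,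
      eval_neg]
    rw [hdiff, hηinv, hηv]
    have hsne : s ≠ 0 := hs0.ne'
    field_simp
    ring_nf
    linear_combination (-(20*s*x - 16*s*x^3 - 8*s^2 + 16*s^2*x^2)
      - a*(8*s - 16*s*x^2 - 12*x + 16*x^3)) * hs2
  have base0 : C η⁻¹ * Q 2 - 2 * X * Q 1 + C η * Q 0 = C (-2) := by
    rw [hQm 2 (by omega), hQ1, hQ0]
    norm_num [Finset.sum_range_succ, Finset.sum_range_one, T_zero, T_one, T_two]
    apply Polynomial.funext
    intro x
    simp only [eval_add, eval_sub, eval_mul, eval_C, eval_X, eval_pow, eval_ofNat, eval_one,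
      eval_neg]
    rw [hdiff, hηinv, hηv, ← hs2]
    have hsne : s ≠ 0 := hs0.ne'
    field_simp
    ring_nf
    linear_combination (8*x^2 - 8*s*x) * hs2
  have main : ∀ m : ℕ, 1 ≤ m →
      C η⁻¹ * Q (m + 2) - 2 * X * Q (m + 1) + C η * Q m = C (-2) := by
    intro m hm
    induction m, hm using Nat.le_induction with
    | base => exact base1
    | succ n hn ih => rw [hstep n hn]; exact ih
  intro m
  match m with
  | 0 => exact base0
  | (m + 1) => exact main (m + 1) (by omega)
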